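/- Let M be a symmetric D×D matrix with decomposition M = M₊ + M₋ into strictly positive and strictly negative eigenspace parts. Suppose W̄ ∈ ℝ^{D×K} is a local minimum of W ↦ ‖M − WWᵀ‖_F². Then the column span of W̄ is contained in the non-negative eigenspace of M (i.e., P₋W̄ = 0 where P₋ projects onto the strictly negative eigenspace). -/

import Mathlib

open Matrix

/-- Squared Frobenius norm of a real matrix. -/
def frobSq {m n : Type*} [Fintype m] [Fintype n] (M : Matrix m n ℝ) : ℝ :=
  ∑ i, ∑ j, (M i j) ^ 2

lemma firstOrder {D K : ℕ} (M : Matrix (Fin D) (Fin D) ℝ) (hM : M.IsSymm)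
    (Wbar : Matrix (Fin D) (Fin K) ℝ)
    (hmin : IsLocalMin (fun W : Matrix (Fin D) (Fin K) ℝ => frobSq (M - W * Wᵀ)) Wbar) :
    (M - Wbar * Wbarᵀ) * Wbar = 0 := by
  set A := M - Wbar * Wbarᵀ with hA
  have hAsym : Aᵀ = A := by
    rw [hA, transpose_sub, transpose_mul, transpose_transpose, hM.eq]
  set E := A * Wbar with hE
  set B := E * Wbarᵀ + Wbar * Eᵀ with hB
  set g : ℝ → ℝ := fun t => frobSq (M - (Wbar + t • E) * (Wbar + t • E)ᵀ) with hg
  have hgeq : g = fun t => ∑ i, ∑ j,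
      (M i j - ∑ k, (Wbar i k + t * E i k) * (Wbar j k + t * E j k)) ^ 2 := by
    funext t
    simp [hg, frobSq, Matrix.sub_apply, Matrix.mul_apply, Matrix.add_apply,
      Matrix.smul_apply, Matrix.transpose_apply, smul_eq_mul]
  have hder : HasDerivAt g (∑ i, ∑ j, 2 * A i j * (-(B i j))) 0 := by
    rw [hgeq]
    apply HasDerivAt.fun_sum
    intro i _
    apply HasDerivAt.fun_sum
    intro j _
    have h1 : HasDerivAt (fun t : ℝ => ∑ k, (Wbar i k + t * E i k) * (Wbar j k + t * E j k))
        (B i j) 0 := by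
      have h2 : ∀ k ∈ Finset.univ, HasDerivAt
          (fun t : ℝ => (Wbar i k + t * E i k) * (Wbar j k + t * E j k))
          (E i k * Wbar j k + Wbar i k * E j k) 0 := by
        intro k _
        have ha : HasDerivAt (fun t : ℝ => Wbar i k + t * E i k) (E i k) 0 := by
          simpa using ((hasDerivAt_id (0 : ℝ)).mul_const (E i k)).const_add (Wbar i k)
        have hb : HasDerivAt (fun t : ℝ => Wbar j k + t * E j k) (E j k) 0 := by
          simpa using ((hasDerivAt_id (0 : ℝ)).mul_const (E j k)).const_add (Wbar j k)
        simpa using ha.fun_mul hb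
      have := HasDerivAt.fun_sum h2
      simpa [hB, Matrix.add_apply, Matrix.mul_apply, Matrix.transpose_apply,
        Finset.sum_add_distrib] using this
    have h3 := (h1.const_sub (M i j)).fun_pow 2
    simpa [hA, Matrix.sub_apply, Matrix.mul_apply, Matrix.transpose_apply] using h3
  have hmin' : IsLocalMin g 0 := by
    have hφ : Filter.Tendsto (fun t : ℝ => Wbar + t • E) (nhds 0) (nhds (Wbar + (0:ℝ) • E)) :=
      (continuous_const.add (continuous_id.smul continuous_const)).continuousAt
    have hmin2 : IsLocalMin (fun W : Matrix (Fin D) (Fin K) ℝ => frobSq (M - W * Wᵀ))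
        ((fun t : ℝ => Wbar + t • E) 0) := by simpa using hmin
    have hφ' : Filter.Tendsto (fun t : ℝ => Wbar + t • E) (nhds 0)
        (nhds ((fun t : ℝ => Wbar + t • E) 0)) :=
      ((continuous_const.add (continuous_id.smul continuous_const)).continuousAt :
        ContinuousAt (fun t : ℝ => Wbar + t • E) 0)
    exact IsMinFilter.comp_tendsto (g := fun t : ℝ => Wbar + t • E) (b := (0:ℝ)) hmin2 hφ'
  have hd0 : (∑ i, ∑ j, 2 * A i j * (-(B i j))) = 0 := by
    rw [← hder.deriv]; exact hmin'.deriv_eq_zero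
  -- turn it into trace statement
  have hsum : ∑ i, ∑ j, A i j * B i j = 0 := by
    have : ∑ i, ∑ j, 2 * A i j * (-(B i j)) = -2 * ∑ i, ∑ j, A i j * B i j := by
      rw [Finset.mul_sum]
      refine Finset.sum_congr rfl fun i _ => ?_
      rw [Finset.mul_sum]
      exact Finset.sum_congr rfl fun j _ => by ring
    rw [this] at hd0; linarith
  have htr : ∑ i, ∑ j, A i j * B i j = 2 * ∑ k, ∑ i, E i k ^ 2 := by
    have h1 : ∑ i, ∑ j, A i j * B i j = Matrix.trace (A * Bᵀ) := by
      simp [Matrix.trace, Matrix.diag, Matrix.mul_apply]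
    have hBsym : Bᵀ = B := by
      simp only [hB, transpose_add, transpose_mul, transpose_transpose]
      exact add_comm _ _
    rw [h1, hBsym, hB, mul_add]
    have hWA : Wbarᵀ * A = Eᵀ := by rw [hE, transpose_mul, hAsym]
    have t1 : Matrix.trace (A * (E * Wbarᵀ)) = Matrix.trace (Eᵀ * E) := by
      rw [Matrix.trace_mul_comm, Matrix.mul_assoc, hWA, Matrix.trace_mul_comm]
    have t2 : Matrix.trace (A * (Wbar * Eᵀ)) = Matrix.trace (Eᵀ * E) := by
      rw [← Matrix.mul_assoc, ← hE, Matrix.trace_mul_comm]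

    rw [Matrix.trace_add, t1, t2, two_mul]
    congr 1 <;> simp [Matrix.trace, Matrix.diag, Matrix.mul_apply, sq]
  rw [htr] at hsum
  have hEzero : ∀ i k, E i k = 0 := by
    intro i k
    have hnn : ∀ k ∈ (Finset.univ : Finset (Fin K)), (0:ℝ) ≤ ∑ i, E i k ^ 2 := by
      intro k _; positivity
    have := (Finset.sum_eq_zero_iff_of_nonneg hnn).mp (by linarith) k (Finset.mem_univ k)
    have hnn2 : ∀ i ∈ (Finset.univ : Finset (Fin D)), (0:ℝ) ≤ E i k ^ 2 := by
      intro i _; positivity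
    have := (Finset.sum_eq_zero_iff_of_nonneg hnn2).mp this i (Finset.mem_univ i)
    exact pow_eq_zero_iff (by norm_num) |>.mp this
  ext i k
  simpa using hEzero i k

theorem stmt_7 {D K : ℕ} (M V : Matrix (Fin D) (Fin D) ℝ) (hM : M.IsSymm)
    (hV : Vᵀ * V = 1) (eig : Fin D → ℝ)
    (hdecomp : M = V * Matrix.diagonal eig * Vᵀ)
    (Wbar : Matrix (Fin D) (Fin K) ℝ)
    (hmin : IsLocalMin (fun W : Matrix (Fin D) (Fin K) ℝ => frobSq (M - W * Wᵀ)) Wbar) :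
    (V * Matrix.diagonal (fun i => if eig i < 0 then (1 : ℝ) else 0) * Vᵀ) * Wbar = 0 := by
  have hfo := firstOrder M hM Wbar hmin
  have hVVt : V * Vᵀ = 1 := mul_eq_one_comm.mp hV
  obtain ⟨U, hU⟩ : ∃ U, U = Vᵀ * Wbar := ⟨_, rfl⟩
  have hWU : Wbar = V * U := by
    rw [hU, ← Matrix.mul_assoc, hVVt, Matrix.one_mul]
  have hMW : M * Wbar = Wbar * (Wbarᵀ * Wbar) := by
    have h := hfo
    rw [Matrix.sub_mul, sub_eq_zero, Matrix.mul_assoc] at h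
    exact h
  have hWtW : Wbarᵀ * Wbar = Uᵀ * U := by
    conv_lhs => rw [hWU]
    rw [Matrix.transpose_mul, Matrix.mul_assoc, ← Matrix.mul_assoc Vᵀ V U, hV, Matrix.one_mul]
  have hkey : Matrix.diagonal eig * U = U * (Uᵀ * U) := by
    have h1 : V * (Matrix.diagonal eig * U) = V * (U * (Uᵀ * U)) := by
      calc V * (Matrix.diagonal eig * U)
          = (V * Matrix.diagonal eig * Vᵀ) * Wbar := by
            rw [hU, ← Matrix.mul_assoc, ← Matrix.mul_assoc]
        _ = M * Wbar := by rw [← hdecomp]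
        _ = Wbar * (Wbarᵀ * Wbar) := hMW
        _ = V * (U * (Uᵀ * U)) := by
            rw [hWtW]; conv_lhs => rw [hWU]
            rw [Matrix.mul_assoc]
    calc Matrix.diagonal eig * U
        = Vᵀ * (V * (Matrix.diagonal eig * U)) := by
          rw [← Matrix.mul_assoc, hV, Matrix.one_mul]
      _ = Vᵀ * (V * (U * (Uᵀ * U))) := by rw [h1]
      _ = U * (Uᵀ * U) := by rw [← Matrix.mul_assoc, hV, Matrix.one_mul]
  obtain ⟨G, hG⟩ : ∃ G, G = U * Uᵀ := ⟨_, rfl⟩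
  have hGsym : ∀ a b, G a b = ∑ k, U a k * U b k := by
    intro a b; simp [hG, Matrix.mul_apply]
  have hrow : ∀ i, eig i < 0 → ∀ k, U i k = 0 := by
    intro i hneg k
    have hGU : U * (Uᵀ * U) = G * U := by rw [hG, Matrix.mul_assoc]
    have heq : ∀ k, eig i * U i k = (G * U) i k := by
      intro k
      have h := congrArg (fun X => X i k) (hkey.trans hGU)
      simpa [Matrix.mul_apply, Matrix.diagonal_apply, ite_mul, Finset.sum_ite_eq] using h
    have hsum : eig i * G i i = ∑ j, (G i j) ^ 2 := by
      have l1 : eig i * G i i = ∑ k, U i k * (eig i * U i k) := by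
        rw [hGsym, Finset.mul_sum]
        exact Finset.sum_congr rfl fun k _ => by ring
      rw [l1]
      calc ∑ k, U i k * (eig i * U i k) = ∑ k, U i k * (G * U) i k :=
            Finset.sum_congr rfl fun k _ => by rw [heq]
        _ = ∑ k, ∑ j, U i k * (G i j * U j k) := by
            refine Finset.sum_congr rfl fun k _ => ?_
            rw [Matrix.mul_apply, Finset.mul_sum]
        _ = ∑ j, ∑ k, U i k * (G i j * U j k) := Finset.sum_comm
        _ = ∑ j, G i j * ∑ k, U i k * U j k := by
            refine Finset.sum_congr rfl fun j _ => ?_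
            rw [Finset.mul_sum]
            exact Finset.sum_congr rfl fun k _ => by ring
        _ = ∑ j, (G i j) ^ 2 := by
            refine Finset.sum_congr rfl fun j _ => ?_
            rw [← hGsym]; ring
    have hGii_nonneg : 0 ≤ G i i := by
      rw [hGsym]; exact Finset.sum_nonneg fun k _ => mul_self_nonneg _
    have hrhs : 0 ≤ ∑ j, (G i j) ^ 2 := by positivity
    have hGii : G i i = 0 := by nlinarith [hsum]
    have hz : ∑ k, U i k ^ 2 = 0 := by
      rw [hGsym] at hGii
      calc ∑ k, U i k ^ 2 = ∑ k, U i k * U i k :=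
            Finset.sum_congr rfl fun k _ => by ring
        _ = 0 := hGii
    have hk := (Finset.sum_eq_zero_iff_of_nonneg (fun k _ => sq_nonneg (U i k))).mp hz k
      (Finset.mem_univ k)
    exact pow_eq_zero_iff (by norm_num) |>.mp hk
  have hDU : Matrix.diagonal (fun i => if eig i < 0 then (1 : ℝ) else 0) * U = 0 := by
    ext i k
    simp only [Matrix.mul_apply, Matrix.diagonal, Matrix.of_apply, Matrix.zero_apply]
    rw [Finset.sum_eq_single i]
    · by_cases h : eig i < 0
      · simp [h, hrow i h k]
      · simp [h]
    · intro b _ hb; simp [Ne.symm hb]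
    · simp
  calc (V * Matrix.diagonal (fun i => if eig i < 0 then (1 : ℝ) else 0) * Vᵀ) * Wbar
      = V * (Matrix.diagonal (fun i => if eig i < 0 then (1 : ℝ) else 0) * (Vᵀ * Wbar)) := by
        rw [Matrix.mul_assoc, Matrix.mul_assoc]
    _ = V * (Matrix.diagonal (fun i => if eig i < 0 then (1 : ℝ) else 0) * U) := by rw [← hU]
    _ = 0 := by rw [hDU, Matrix.mul_zero]
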